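/- Let t be a real number with 0 ≤ t < 2π, let h : ℕ∪{0} → ℂ be any function, and let p be a positive integer. Then Σ_{j=0}^{p} φ(p−j)·ε_{p−j}·Σ_{ξ=0}^{j} h(j−ξ)·(i(t−π))^ξ/ξ! = −(1/2)·Σ_{ξ=0}^{p} h(p−ξ)·((2πi)^ξ/ξ!)·B_ξ(t/2π), where ε_m = (1+(−1)^m)/2 (so ε_m = 1 for m even and 0 for m odd), and for even non-negative integers m, φ(m) = (2^{1−m}−1)·ζ(m) with ζ the Riemann zeta-function (in particular φ(0) = −1/2); terms with p−j odd vanish because ε_{p−j} = 0. -/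

import Mathlib

open Finset

section Aux

open PowerSeries Polynomial Complex

/-- Exponential generating function of the Bernoulli polynomials evaluated at `s`. -/
noncomputable def Bps (s : ℂ) : PowerSeries ℂ :=
  PowerSeries.mk fun n => Polynomial.aeval s ((1 / n.factorial : ℚ) • Polynomial.bernoulli n)

lemma rescale_X' (a : ℂ) :
    rescale a (PowerSeries.X : PowerSeries ℂ) = PowerSeries.C a * PowerSeries.X := by
  ext n
  simp only [coeff_rescale, PowerSeries.coeff_X, PowerSeries.coeff_C_mul]
  rcases eq_or_ne n 1 with rfl | hn
  · simp
  · simp [hn]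

/-- The power-series form of the duplication formula for Bernoulli polynomials. -/
lemma key_ps (x : ℂ) :
    (PowerSeries.C 2 * rescale (2⁻¹ : ℂ) (Bps 0) - Bps 0) * rescale x (PowerSeries.exp ℂ)
      = Bps (x + 2⁻¹) := by
  have hne : (PowerSeries.exp ℂ - 1) ≠ 0 := by
    intro hcon
    have := congrArg (PowerSeries.coeff 1) hcon
    simp [PowerSeries.coeff_exp] at this
  apply mul_right_cancel₀ hne
  have h1 : Bps 0 * (PowerSeries.exp ℂ - 1) = PowerSeries.X := by
    rw [Bps, Polynomial.bernoulli_generating_function (0 : ℂ), rescale_zero]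
    simp
  have h2 : rescale (2⁻¹ : ℂ) (Bps 0) * (rescale (2⁻¹ : ℂ) (PowerSeries.exp ℂ) - 1)
      = PowerSeries.C 2⁻¹ * PowerSeries.X := by
    have := congrArg (rescale (2⁻¹ : ℂ)) h1
    rw [map_mul, map_sub, map_one, rescale_X'] at this
    exact this
  have h3 : rescale (2⁻¹ : ℂ) (PowerSeries.exp ℂ) * rescale (2⁻¹ : ℂ) (PowerSeries.exp ℂ)
      = PowerSeries.exp ℂ := by
    rw [PowerSeries.exp_mul_exp_eq_exp_add]
    norm_num
  have h4 : rescale (2⁻¹ : ℂ) (PowerSeries.exp ℂ) * rescale x (PowerSeries.exp ℂ)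
      = rescale (x + 2⁻¹) (PowerSeries.exp ℂ) := by
    rw [PowerSeries.exp_mul_exp_eq_exp_add, add_comm]
  have hB : Bps (x + 2⁻¹) * (PowerSeries.exp ℂ - 1)
      = PowerSeries.X * rescale (x + 2⁻¹) (PowerSeries.exp ℂ) :=
    Polynomial.bernoulli_generating_function _
  have hC : (PowerSeries.C (2:ℂ)) * PowerSeries.C (2⁻¹:ℂ) = 1 := by
    rw [← map_mul]
    norm_num
  rw [hB]
  set E := PowerSeries.exp ℂ
  set Eh := rescale (2⁻¹ : ℂ) E
  set Ex := rescale x E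
  set B0 := Bps 0
  set RB := rescale (2⁻¹ : ℂ) B0
  set X := (PowerSeries.X : PowerSeries ℂ)
  linear_combination X * h4 + (-(PowerSeries.C 2) * RB * Ex) * h3
    + ((PowerSeries.C 2) * (Eh + 1) * Ex) * h2 + (X * (Eh + 1) * Ex) * hC + (-Ex) * h1

lemma aeval0 (k : ℕ) : Polynomial.aeval (0:ℂ) ((1 / k.factorial : ℚ) • Polynomial.bernoulli k)
    = (1 / k.factorial : ℂ) * (_root_.bernoulli k : ℂ) := by
  rw [map_smul]
  rw [show (0:ℂ) = algebraMap ℚ ℂ 0 by simp, Polynomial.aeval_algebraMap_apply]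
  simp [Polynomial.bernoulli_eval_zero, Rat.smul_def]

lemma coeff_key (x : ℂ) (n : ℕ) :
    ∑ k ∈ range (n+1), (2 * (2⁻¹:ℂ)^k - 1) * ((_root_.bernoulli k : ℂ) / (k.factorial : ℂ))
        * (x^(n-k) / ((n-k).factorial : ℂ))
      = ((n.factorial : ℂ))⁻¹ * Polynomial.aeval (x + 2⁻¹) (Polynomial.bernoulli n) := by
  have hc := congrArg (PowerSeries.coeff n) (key_ps x)
  rw [PowerSeries.coeff_mul, Finset.Nat.sum_antidiagonal_eq_sum_range_succ_mk] at hc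
  simp only [map_sub, PowerSeries.coeff_C_mul, coeff_rescale, Bps, PowerSeries.coeff_mk,
    PowerSeries.coeff_exp] at hc
  have hR : Polynomial.aeval (x+2⁻¹) ((1 / n.factorial : ℚ) • Polynomial.bernoulli n)
      = (n.factorial:ℂ)⁻¹ * Polynomial.aeval (x+2⁻¹) (Polynomial.bernoulli n) := by
    rw [map_smul, Rat.smul_def]; push_cast; ring
  rw [hR] at hc
  rw [← hc]
  refine Finset.sum_congr rfl fun k hk => ?_
  rw [aeval0 k, eq_ratCast (algebraMap ℚ ℂ) ((1:ℚ) / (n-k).factorial)]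
  push_cast
  ring

lemma zeta_to_bern (m : ℕ) :
    ((2:ℂ) ^ ((1:ℂ) - (m:ℂ)) - 1) * riemannZeta (m:ℂ) * ((1 + (-1:ℂ)^m)/2)
      = -(1/2) * (2*(2⁻¹:ℂ)^m - 1) * ((_root_.bernoulli m : ℂ) / (m.factorial : ℂ))
        * (2*(Real.pi:ℂ)*Complex.I)^m := by
  have h2 : (2:ℂ) ^ ((1:ℂ) - (m:ℂ)) = 2 * (2⁻¹:ℂ)^m := by
    rw [Complex.cpow_sub _ _ two_ne_zero, Complex.cpow_one, Complex.cpow_natCast, inv_pow,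
      div_eq_mul_inv]
  rw [h2]
  rcases Nat.even_or_odd m with he | ho
  · have hneg : (-1:ℂ)^m = 1 := he.neg_one_pow
    obtain ⟨k, rfl⟩ := he
    rcases Nat.eq_zero_or_pos k with rfl | hk
    · simp [riemannZeta_zero]
      norm_num
    · rw [show k + k = 2*k from (two_mul k).symm] at *
      rw [hneg]
      push_cast
      rw [riemannZeta_two_mul_nat hk.ne']
      have hI : (2*(Real.pi:ℂ)*Complex.I)^(2*k)
          = (-1:ℂ)^k * 2^(2*k) * (Real.pi:ℂ)^(2*k) := by
        rw [mul_pow, mul_pow, pow_mul Complex.I 2, Complex.I_sq]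
        ring
      have h2k : (2:ℂ)^(2*k) = 2 * 2^(2*k-1) := by
        rw [← pow_succ']
        congr 1
        omega
      rw [hI, h2k, pow_succ]
      ring
  · have hneg : (-1:ℂ)^m = -1 := ho.neg_one_pow
    rw [hneg]
    rcases eq_or_ne m 1 with rfl | hm1
    · norm_num
    · rw [bernoulli_eq_bernoulli'_of_ne_one hm1,
        bernoulli'_eq_zero_of_odd ho (by rcases ho with ⟨r, rfl⟩; omega)]
      norm_num

lemma c_eq (x : ℂ) (n : ℕ) :
    ∑ k ∈ range (n+1),
        (((2:ℂ) ^ ((1:ℂ) - (k:ℂ)) - 1) * riemannZeta (k:ℂ) * ((1 + (-1:ℂ)^k)/2))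
          * ((2*(Real.pi:ℂ)*Complex.I*x)^(n-k) / ((n-k).factorial : ℂ))
      = -(1/2) * ((2*(Real.pi:ℂ)*Complex.I)^n / (n.factorial : ℂ))
          * Polynomial.aeval (x + 2⁻¹) (Polynomial.bernoulli n) := by
  have step : ∀ k ∈ range (n+1),
      (((2:ℂ) ^ ((1:ℂ) - (k:ℂ)) - 1) * riemannZeta (k:ℂ) * ((1 + (-1:ℂ)^k)/2))
          * ((2*(Real.pi:ℂ)*Complex.I*x)^(n-k) / ((n-k).factorial : ℂ))
        = (-(1/2) * (2*(Real.pi:ℂ)*Complex.I)^n)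
          * ((2 * (2⁻¹:ℂ)^k - 1) * ((_root_.bernoulli k : ℂ) / (k.factorial : ℂ))
            * (x^(n-k) / ((n-k).factorial : ℂ))) := by
    intro k hk
    rw [zeta_to_bern k, mul_pow (2*(Real.pi:ℂ)*Complex.I) x]
    have hpow : (2*(Real.pi:ℂ)*Complex.I)^n
        = (2*(Real.pi:ℂ)*Complex.I)^k * (2*(Real.pi:ℂ)*Complex.I)^(n-k) := by
      rw [← pow_add]
      congr 1
      simp only [mem_range] at hk
      omega
    rw [hpow]
    ring
  rw [Finset.sum_congr rfl step, ← Finset.mul_sum, coeff_key]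
  ring

lemma reflect_conv (f g : ℕ → ℂ) (n : ℕ) :
    ∑ ξ ∈ range (n+1), f (n-ξ) * g ξ = ∑ ξ ∈ range (n+1), f ξ * g (n-ξ) := by
  rw [← Finset.sum_range_reflect (fun ξ => f ξ * g (n-ξ)) (n+1)]
  refine Finset.sum_congr rfl fun ξ hξ => ?_
  simp only [mem_range] at hξ
  rw [show n + 1 - 1 - ξ = n - ξ from by omega, show n - (n - ξ) = ξ from by omega]

lemma conv_assoc (A b c h : ℕ → ℂ)
    (hconv : PowerSeries.mk A * PowerSeries.mk b = PowerSeries.mk c) (p : ℕ) :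
    ∑ j ∈ range (p+1), A (p-j) * ∑ ξ ∈ range (j+1), h (j-ξ) * b ξ
      = ∑ ξ ∈ range (p+1), h (p-ξ) * c ξ := by
  have e1 : ∀ j : ℕ, ∑ ξ ∈ range (j+1), h (j-ξ) * b ξ
      = PowerSeries.coeff j (PowerSeries.mk h * PowerSeries.mk b) := by
    intro j
    rw [PowerSeries.coeff_mul, Finset.Nat.sum_antidiagonal_eq_sum_range_succ_mk]
    simp only [PowerSeries.coeff_mk]
    exact reflect_conv h b j
  calc ∑ j ∈ range (p+1), A (p-j) * ∑ ξ ∈ range (j+1), h (j-ξ) * b ξ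
      = ∑ j ∈ range (p+1),
          PowerSeries.coeff j (PowerSeries.mk h * PowerSeries.mk b) * A (p-j) := by
        refine Finset.sum_congr rfl fun j _ => ?_
        rw [e1 j, mul_comm]
    _ = PowerSeries.coeff p ((PowerSeries.mk h * PowerSeries.mk b) * PowerSeries.mk A) := by
        rw [PowerSeries.coeff_mul, Finset.Nat.sum_antidiagonal_eq_sum_range_succ_mk]
        simp only [PowerSeries.coeff_mk]
    _ = PowerSeries.coeff p (PowerSeries.mk h * PowerSeries.mk c) := by
        rw [mul_assoc, mul_comm (PowerSeries.mk b) (PowerSeries.mk A), hconv]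
    _ = ∑ ξ ∈ range (p+1), h ξ * c (p-ξ) := by
        rw [PowerSeries.coeff_mul, Finset.Nat.sum_antidiagonal_eq_sum_range_succ_mk]
        simp only [PowerSeries.coeff_mk]
    _ = ∑ ξ ∈ range (p+1), h (p-ξ) * c ξ := (reflect_conv h c p).symm

end Aux

/-- Lemma of Komori–Matsumoto–Tsumura: for t ∈ [0,2π), any function h : ℕ → ℂ
and any p ≥ 1,
Σ_{j=0}^{p} φ(p−j) ε_{p−j} Σ_{ξ=0}^{j} h(j−ξ) (i(t−π))^ξ/ξ!
  = −(1/2) Σ_{ξ=0}^{p} h(p−ξ) (2πi)^ξ/ξ! · B_ξ(t/2π),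
where ε_m = (1+(−1)^m)/2 and φ(m) = (2^{1−m}−1)ζ(m). -/
theorem sum_phi_eps_eq_bernoulli (t : ℝ) (ht0 : 0 ≤ t) (ht : t < 2 * Real.pi)
    (h : ℕ → ℂ) (p : ℕ) (hp : 0 < p) :
    ∑ j ∈ range (p + 1),
      ((2 : ℂ) ^ ((1 : ℂ) - ((p - j : ℕ) : ℂ)) - 1) * riemannZeta ((p - j : ℕ) : ℂ)
        * ((1 + (-1 : ℂ) ^ (p - j)) / 2)
        * ∑ ξ ∈ range (j + 1),
            h (j - ξ) * (Complex.I * ((t : ℂ) - (Real.pi : ℂ))) ^ ξ / (Nat.factorial ξ : ℂ)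
    = -(1 / 2) * ∑ ξ ∈ range (p + 1),
        h (p - ξ) * (2 * (Real.pi : ℂ) * Complex.I) ^ ξ / (Nat.factorial ξ : ℂ)
          * Polynomial.aeval ((t : ℂ) / (2 * (Real.pi : ℂ))) (Polynomial.bernoulli ξ) := by
  have hπ : ((Real.pi : ℂ)) ≠ 0 := Complex.ofReal_ne_zero.mpr Real.pi_ne_zero
  set x : ℂ := ((t:ℂ) - (Real.pi:ℂ)) / (2*(Real.pi:ℂ)) with hxdef
  have hx : 2*(Real.pi:ℂ)*Complex.I*x = Complex.I * ((t:ℂ) - (Real.pi:ℂ)) := by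
    rw [hxdef]; field_simp
  have hx2 : x + 2⁻¹ = (t:ℂ) / (2*(Real.pi:ℂ)) := by
    rw [hxdef]; field_simp; ring
  have hconv : PowerSeries.mk
        (fun m => ((2:ℂ)^((1:ℂ)-(m:ℂ)) - 1) * riemannZeta (m:ℂ) * ((1 + (-1:ℂ)^m)/2))
      * PowerSeries.mk
        (fun ξ => (Complex.I * ((t:ℂ) - (Real.pi:ℂ)))^ξ / (ξ.factorial : ℂ))
      = PowerSeries.mk (fun n => -(1/2) * ((2*(Real.pi:ℂ)*Complex.I)^n / (n.factorial:ℂ))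
          * Polynomial.aeval ((t:ℂ)/(2*(Real.pi:ℂ))) (Polynomial.bernoulli n)) := by
    ext n
    rw [PowerSeries.coeff_mul, Finset.Nat.sum_antidiagonal_eq_sum_range_succ_mk]
    simp only [PowerSeries.coeff_mk]
    have hkey := c_eq x n
    rw [hx2] at hkey
    rw [← hkey]
    refine Finset.sum_congr rfl fun k hk => ?_
    rw [hx]
  have main := conv_assoc _ _ _ h hconv p
  calc ∑ j ∈ range (p + 1),
      ((2 : ℂ) ^ ((1 : ℂ) - ((p - j : ℕ) : ℂ)) - 1) * riemannZeta ((p - j : ℕ) : ℂ)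
        * ((1 + (-1 : ℂ) ^ (p - j)) / 2)
        * ∑ ξ ∈ range (j + 1),
            h (j - ξ) * (Complex.I * ((t : ℂ) - (Real.pi : ℂ))) ^ ξ / (Nat.factorial ξ : ℂ)
      = ∑ j ∈ range (p+1),
          (((2:ℂ)^((1:ℂ)-((p-j : ℕ):ℂ)) - 1) * riemannZeta ((p-j : ℕ):ℂ)
              * ((1 + (-1:ℂ)^(p-j))/2))
            * ∑ ξ ∈ range (j+1),
              h (j-ξ) * ((Complex.I * ((t:ℂ) - (Real.pi:ℂ)))^ξ / (ξ.factorial : ℂ)) := by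
        refine Finset.sum_congr rfl fun j _ => ?_
        congr 1
        exact Finset.sum_congr rfl fun ξ _ => (mul_div_assoc _ _ _)
    _ = ∑ ξ ∈ range (p+1),
          h (p-ξ) * (-(1/2) * ((2*(Real.pi:ℂ)*Complex.I)^ξ / (ξ.factorial:ℂ))
            * Polynomial.aeval ((t:ℂ)/(2*(Real.pi:ℂ))) (Polynomial.bernoulli ξ)) := main
    _ = -(1 / 2) * ∑ ξ ∈ range (p + 1),
        h (p - ξ) * (2 * (Real.pi : ℂ) * Complex.I) ^ ξ / (Nat.factorial ξ : ℂ)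
          * Polynomial.aeval ((t : ℂ) / (2 * (Real.pi : ℂ))) (Polynomial.bernoulli ξ) := by
        rw [Finset.mul_sum]
        refine Finset.sum_congr rfl fun ξ _ => ?_
        ring
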